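/- Let M be a metric space and μ a finite nonzero Borel measure on M. Suppose there exist real numbers R > s > 0 and a positive integer N such that μ(B(p,R)) ≥ 2N · μ(closedBall(p,s)) for every p ∈ M (open ball on the left, closed ball on the right). Then for any collection of at most N points p₁,…,p_t in M and radii r₁,…,r_t each at most s, the support of μ is not contained in the union of the closed balls closedBall(pᵢ, rᵢ). -/

import Mathlib

open MeasureTheory Metric ENNReal

/-- The support of a Borel measure: points all of whose neighborhoods have
positive measure. -/
def measureSupport {M : Type*} [TopologicalSpace M] [MeasurableSpace M]
    (μ : Measure M) : Set M :=
  {x | ∀ U ∈ nhds x, 0 < μ U}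

/-- If a finite nonzero Borel measure on a (second countable) metric space satisfies the
doubling-type bound `μ(B(p,R)) ≥ 2N · μ(closedBall(p,s))`, then its support cannot be
covered by at most `N` closed balls of radii at most `s`. -/
theorem support_not_covered_by_few_small_balls
    {M : Type*} [MetricSpace M] [MeasurableSpace M] [BorelSpace M]
    [SecondCountableTopology M]
    (μ : Measure M) [IsFiniteMeasure μ] (hμ : 0 < μ Set.univ)
    (R s : ℝ) (N : ℕ) (hsR : s < R) (hs : 0 < s) (hN : 0 < N)
    (hdoub : ∀ p : M, 2 * (N : ℝ≥0∞) * μ (closedBall p s) ≤ μ (ball p R))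
    (t : ℕ) (ht : t ≤ N) (p : Fin t → M) (r : Fin t → ℝ) (hr : ∀ i, r i ≤ s) :
    ¬ (measureSupport μ ⊆ ⋃ i, closedBall (p i) (r i)) := by
  intro hcov
  -- complement of the support is null
  have hnull : μ (measureSupport μ)ᶜ = 0 := by
    apply measure_null_of_locally_null
    intro x hx
    simp only [measureSupport, Set.mem_compl_iff, Set.mem_setOf_eq, not_forall] at hx
    obtain ⟨U, hU, hUμ⟩ := hx
    refine ⟨U, mem_nhdsWithin_of_mem_nhds hU, ?_⟩
    simpa using not_lt.mp hUμ
  have huniv : μ Set.univ ≤ μ (⋃ i, closedBall (p i) (r i)) := by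
    calc μ Set.univ ≤ μ ((⋃ i, closedBall (p i) (r i)) ∪ (measureSupport μ)ᶜ) := by
          apply measure_mono
          intro x _
          by_cases hx : x ∈ measureSupport μ
          · exact Or.inl (hcov hx)
          · exact Or.inr hx
      _ ≤ μ (⋃ i, closedBall (p i) (r i)) + μ (measureSupport μ)ᶜ := measure_union_le _ _
      _ = μ (⋃ i, closedBall (p i) (r i)) := by rw [hnull, add_zero]
  rcases Nat.eq_zero_or_pos t with ht0 | ht0
  · subst ht0
    simp only [Set.iUnion_of_empty, measure_empty] at huniv
    exact hμ.ne' (le_antisymm huniv zero_le)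
  -- pick the ball of largest measure
  haveI : Nonempty (Fin t) := ⟨⟨0, ht0⟩⟩
  obtain ⟨j, -, hj⟩ := Finset.exists_max_image Finset.univ
    (fun i => μ (closedBall (p i) s)) ⟨⟨0, ht0⟩, Finset.mem_univ _⟩
  set x := μ (closedBall (p j) s) with hx
  have hsum : μ Set.univ ≤ (N : ℝ≥0∞) * x := by
    calc μ Set.univ ≤ μ (⋃ i, closedBall (p i) (r i)) := huniv
      _ ≤ ∑ i : Fin t, μ (closedBall (p i) (r i)) := measure_iUnion_fintype_le _ _
      _ ≤ ∑ _i : Fin t, x := by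
          apply Finset.sum_le_sum
          intro i _
          exact le_trans (measure_mono (closedBall_subset_closedBall (hr i)))
            (hj i (Finset.mem_univ i))
      _ = (t : ℝ≥0∞) * x := by simp [mul_comm]
      _ ≤ (N : ℝ≥0∞) * x := by
          gcongr
  have h2 : 2 * (N : ℝ≥0∞) * x ≤ (N : ℝ≥0∞) * x :=
    le_trans (hdoub (p j)) (le_trans (measure_mono (Set.subset_univ _)) hsum)
  have hfin : (N : ℝ≥0∞) * x ≠ ⊤ :=
    ENNReal.mul_ne_top (ENNReal.natCast_ne_top N) (measure_ne_top μ _)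
  have hzero : (N : ℝ≥0∞) * x = 0 := by
    have h3 : (N : ℝ≥0∞) * x + (N : ℝ≥0∞) * x ≤ (N : ℝ≥0∞) * x + 0 := by
      rw [add_zero, ← two_mul, ← mul_assoc]
      exact h2
    have := (ENNReal.add_le_add_iff_left hfin).mp h3
    exact le_antisymm this zero_le
  exact hμ.ne' (le_antisymm (hsum.trans hzero.le) zero_le)
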